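/- Let H ∈ ℂ^{n×n} be Hermitian, let ρ ∈ ℂ^{n×n} be positive semidefinite with Tr(ρ) = 1, and let ξ ∈ ℂⁿ be a unit vector. Then |Tr(i[H, ρ] ξξ*)| ≤ 2‖H‖ √(1 − ξ*ρξ), where [H, ρ] = Hρ − ρH and ‖H‖ denotes the operator norm of H. -/

import Mathlib

open Matrix ComplexOrder

noncomputable section

private lemma trace_mul_vecMulVec_aux {n : Type*} [Fintype n] (A : Matrix n n ℂ) (x y : n → ℂ) :
    (A * vecMulVec x y).trace = y ⬝ᵥ A.mulVec x := by
  simp only [Matrix.trace, Matrix.diag, Matrix.mul_apply, Matrix.vecMulVec_apply, dotProduct,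
    Matrix.mulVec, Finset.mul_sum]
  congr 1; ext i; congr 1; ext j; ring

private lemma norm_equiv_symm_sq_aux {n : Type*} [Fintype n] (x : n → ℂ) :
    ‖(WithLp.equiv 2 (n → ℂ)).symm x‖ ^ 2 = (star x ⬝ᵥ x).re := by
  have h := inner_self_eq_norm_sq (𝕜 := ℂ) ((WithLp.equiv 2 (n → ℂ)).symm x)
  rw [WithLp.equiv_symm_apply, EuclideanSpace.inner_toLp_toLp, dotProduct_comm] at h
  exact h.symm

private lemma sub_sq_posSemidef_aux {n : Type*} [Fintype n] [DecidableEq n]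
    (ρ : Matrix n n ℂ) (hρ : ρ.PosSemidef) (hTr : ρ.trace = 1) :
    (ρ - ρ * ρ).PosSemidef := by
  have hsp := hρ.1.spectral_theorem
  set U : Matrix n n ℂ := (hρ.1.eigenvectorUnitary : Matrix n n ℂ) with hU
  set d : n → ℂ := RCLike.ofReal ∘ hρ.1.eigenvalues with hd
  have hmem : U ∈ Matrix.unitaryGroup n ℂ := (hρ.1.eigenvectorUnitary).2
  have hsU : star U * U = 1 := (Matrix.mem_unitaryGroup_iff').mp hmem
  have htr : ∑ i, hρ.1.eigenvalues i = 1 := by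
    have h1 : ρ.trace = (U * diagonal d * star U).trace := by rw [hsp, Unitary.conjStarAlgAut_apply]
    rw [Matrix.trace_mul_cycle, hsU, one_mul, Matrix.trace_diagonal, hTr] at h1
    have h2 : ((∑ i, hρ.1.eigenvalues i : ℝ) : ℂ) = 1 := by
      rw [Complex.ofReal_sum]; exact h1.symm
    exact_mod_cast h2
  have hnn : ∀ i, 0 ≤ hρ.1.eigenvalues i := hρ.eigenvalues_nonneg
  have hle1 : ∀ i, hρ.1.eigenvalues i ≤ 1 := fun i =>
    htr ▸ Finset.single_le_sum (fun j _ => hnn j) (Finset.mem_univ i)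
  have hdiag : (diagonal (fun i => d i - d i * d i)).PosSemidef := by
    refine Matrix.posSemidef_diagonal_iff.mpr fun i => ?_
    have h0 : (0:ℝ) ≤ hρ.1.eigenvalues i - hρ.1.eigenvalues i * hρ.1.eigenvalues i := by
      nlinarith [hnn i, hle1 i]
    have hdi : d i - d i * d i
        = ((hρ.1.eigenvalues i - hρ.1.eigenvalues i * hρ.1.eigenvalues i : ℝ) : ℂ) := by
      simp [hd]
    rw [hdi]
    exact_mod_cast Complex.real_le_real.mpr h0
  have hform : ρ - ρ * ρ = U * diagonal (fun i => d i - d i * d i) * star U := by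
    conv_lhs => rw [hsp, Unitary.conjStarAlgAut_apply]
    have hdd : diagonal (fun i => d i - d i * d i) = diagonal d - diagonal d * diagonal d := by
      rw [Matrix.diagonal_mul_diagonal, ← Matrix.diagonal_sub]
    rw [hdd, Matrix.mul_sub, Matrix.sub_mul]
    congr 1
    calc U * diagonal d * star U * (U * diagonal d * star U)
        = U * (diagonal d * ((star U * U) * diagonal d)) * star U := by
          simp only [mul_assoc]
      _ = U * (diagonal d * diagonal d) * star U := by rw [hsU, one_mul, mul_assoc]
      _ = _ := by simp only [mul_assoc]
  rw [hform, Matrix.star_eq_conjTranspose]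
  exact hdiag.mul_mul_conjTranspose_same U

/-- for Hermitian `H`, a positive semidefinite `ρ` with `Tr(ρ) = 1`
and a unit vector `ξ`, one has `|Tr(i[H,ρ] ξξ*)| ≤ 2‖H‖ √(1 - ξ*ρξ)`, where `‖H‖`
is the operator norm of `H`. -/
theorem commutator_trace_bound {n : Type*} [Fintype n] [DecidableEq n]
    (H ρ : Matrix n n ℂ) (hH : H.IsHermitian) (hρ : ρ.PosSemidef) (hTr : ρ.trace = 1)
    (ξ : n → ℂ) (hξ : star ξ ⬝ᵥ ξ = 1) :
    ‖(Complex.I • (H * ρ - ρ * H) * Matrix.vecMulVec ξ (star ξ)).trace‖ ≤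
      2 * ‖Matrix.toEuclideanCLM (𝕜 := ℂ) H‖ *
        Real.sqrt (1 - (star ξ ⬝ᵥ ρ.mulVec ξ).re) := by
  classical
  set E : (n → ℂ) → EuclideanSpace ℂ n := fun x => (WithLp.equiv 2 (n → ℂ)).symm x with hE
  set s : ℝ := (star ξ ⬝ᵥ ρ.mulVec ξ).re with hs
  set v : n → ℂ := ρ.mulVec ξ - ξ with hv
  set w : ℂ := star ξ ⬝ᵥ H.mulVec v with hw
  -- ξ*ρξ is real and equals s
  have hsc : star ξ ⬝ᵥ ρ.mulVec ξ = (s : ℂ) := by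
    have h := hρ.dotProduct_mulVec_nonneg ξ
    rw [Complex.nonneg_iff] at h
    exact Complex.ext (by simp [hs]) (by simp [← h.2])
  -- Step A: trace identity
  have htrace : (Complex.I • (H * ρ - ρ * H) * Matrix.vecMulVec ξ (star ξ)).trace
      = Complex.I * (star ξ ⬝ᵥ (H * ρ - ρ * H).mulVec ξ) := by
    rw [Matrix.smul_mul, Matrix.trace_smul, trace_mul_vecMulVec_aux, smul_eq_mul]
  -- Step B: commutator identity
  have hcomm : star ξ ⬝ᵥ (H * ρ - ρ * H).mulVec ξ = w - star w := by
    have h1 : star w = star (ρ.mulVec ξ - ξ) ⬝ᵥ H.mulVec ξ := by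
      rw [hw, ← Matrix.star_dotProduct, Matrix.dotProduct_mulVec, Matrix.star_mulVec, hH.eq]
    have h2 : star (ρ.mulVec ξ - ξ) ⬝ᵥ H.mulVec ξ
        = star ξ ⬝ᵥ (ρ * H).mulVec ξ - star ξ ⬝ᵥ H.mulVec ξ := by
      rw [star_sub, sub_dotProduct, Matrix.star_mulVec, hρ.1.eq,
        ← Matrix.dotProduct_mulVec, Matrix.mulVec_mulVec]
    rw [h1, h2, hw, hv, Matrix.mulVec_sub, dotProduct_sub, Matrix.sub_mulVec,
      dotProduct_sub, Matrix.mulVec_mulVec]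
    ring
  -- Step C: Cauchy–Schwarz
  have hCS : ‖w‖ ≤ ‖E (H.mulVec ξ)‖ * ‖E v‖ := by
    have h : w = star (H.mulVec ξ) ⬝ᵥ v := by
      rw [hw, Matrix.dotProduct_mulVec, Matrix.star_mulVec, hH.eq]
    rw [h, dotProduct_comm, ← EuclideanSpace.inner_toLp_toLp]
    exact norm_inner_le_norm _ _
  -- ‖E ξ‖ = 1
  have hξnorm : ‖E ξ‖ = 1 := by
    have h := norm_equiv_symm_sq_aux ξ
    rw [hξ, Complex.one_re] at h
    nlinarith [norm_nonneg (E ξ)]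
  -- Step D: ‖E (Hξ)‖ ≤ ‖H‖
  have hDop : ‖E (H.mulVec ξ)‖ ≤ ‖Matrix.toEuclideanCLM (𝕜 := ℂ) H‖ := by
    have h := (Matrix.toEuclideanCLM (𝕜 := ℂ) H).le_opNorm (E ξ)
    simp only [hE] at h
    rw [show ‖(WithLp.equiv 2 (n → ℂ)).symm ξ‖ = 1 from hξnorm, mul_one] at h
    exact h
  -- Step E: ‖E v‖ ≤ √(1 - s)
  have hE2 : ‖E v‖ ^ 2 ≤ 1 - s := by
    rw [norm_equiv_symm_sq_aux]
    have hexp : star v ⬝ᵥ v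
        = star ξ ⬝ᵥ (ρ * ρ).mulVec ξ - (s:ℂ) - (s:ℂ) + 1 := by
      rw [hv, star_sub, sub_dotProduct, dotProduct_sub, dotProduct_sub]
      have t1 : star (ρ.mulVec ξ) ⬝ᵥ ρ.mulVec ξ = star ξ ⬝ᵥ (ρ * ρ).mulVec ξ := by
        rw [Matrix.star_mulVec, hρ.1.eq, ← Matrix.dotProduct_mulVec, Matrix.mulVec_mulVec]
      have t2 : star (ρ.mulVec ξ) ⬝ᵥ ξ = (s:ℂ) := by
        rw [Matrix.star_dotProduct, hsc]; simp
      rw [t1, t2, hsc, hξ]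
      ring
    have hsq : (star ξ ⬝ᵥ (ρ * ρ).mulVec ξ).re ≤ s := by
      have hpsd := (sub_sq_posSemidef_aux ρ hρ hTr).dotProduct_mulVec_nonneg ξ
      rw [Complex.nonneg_iff] at hpsd
      have := hpsd.1
      rw [Matrix.sub_mulVec, dotProduct_sub, Complex.sub_re, hsc] at this
      simp only [Complex.ofReal_re] at this
      linarith
    rw [hexp]
    simp only [Complex.add_re, Complex.sub_re, Complex.one_re, Complex.ofReal_re]
    linarith
  have hEvle : ‖E v‖ ≤ Real.sqrt (1 - s) := by
    have h1 : ‖E v‖ = Real.sqrt (‖E v‖ ^ 2) := by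
      rw [Real.sqrt_sq (norm_nonneg _)]
    rw [h1]
    exact Real.sqrt_le_sqrt hE2
  -- Assemble
  rw [htrace, hcomm]
  calc ‖Complex.I * (w - star w)‖ = ‖w - star w‖ := by
        rw [norm_mul, Complex.norm_I, one_mul]
    _ ≤ ‖w‖ + ‖star w‖ := norm_sub_le _ _
    _ = 2 * ‖w‖ := by rw [norm_star]; ring
    _ = 2 * ‖w‖ := by rfl
    _ ≤ 2 * (‖E (H.mulVec ξ)‖ * ‖E v‖) := by linarith
    _ ≤ 2 * (‖Matrix.toEuclideanCLM (𝕜 := ℂ) H‖ * Real.sqrt (1 - s)) := by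
        have h0 : (0:ℝ) ≤ ‖E v‖ := norm_nonneg _
        have h1 : (0:ℝ) ≤ ‖E (H.mulVec ξ)‖ := norm_nonneg _
        have := mul_le_mul hDop hEvle h0 (norm_nonneg _)
        linarith
    _ = 2 * ‖Matrix.toEuclideanCLM (𝕜 := ℂ) H‖ * Real.sqrt (1 - s) := by ring
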